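/- (Example 4.2, negative part: failure of person-by-person optimality in the static reduction.) Fix α ∈ (0,1) and β > 1, and fix DM2's static policy δ₂*(y, s) = s, so that DM2's action is u² = ω₂. Then: (a) for every t ∈ ℝ, the constant DM1 policy γ₁ ≡ t gives a static-cost integrand equal to (α − 1)·t² pointwise, so J^S(t, δ₂*) = (α − 1)·t²; (b) consequently, for every M ∈ ℝ there is a measurable γ₁ : ℝ → ℝ with J^S(γ₁, δ₂*) < M, i.e., the infimum of J^S(·, δ₂*) over measurable DM1 policies is −∞; hence (c) the pair (γ₁* ≡ 0, δ₂*), which is the policy-dependent static reduction of the person-by-person optimal dynamic policy of Example 4.2, is not person-by-person optimal for the static team (P^S). -/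

import Mathlib

open MeasureTheory

/-- **Example 4.2 (negative part): failure of person-by-person optimality in the static
reduction.** With the cost `c (ω₂, u¹, u²) = α (u¹)² + β (u² − ω₂)² − (u¹ − u² + ω₂)²`,
`α ∈ (0,1)`, `β > 1`, and DM2's static policy `δ₂* (y, s) = s` (so `u² = ω₂`): constant
DM1 policies `t` give static cost `(α − 1) t²`, the infimum of `J^S (·, δ₂*)` over
measurable DM1 policies is `−∞`, and the pair `(γ₁* ≡ 0, δ₂*)` is not person-by-person
optimal for the static team `(P^S)`. -/
theorem example42_negative
    {Ω : Type*} [MeasurableSpace Ω] (P : Measure Ω) [IsProbabilityMeasure P]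
    (ω₁ ω₂ : Ω → ℝ) (hω₁ : Measurable ω₁) (hω₂ : Measurable ω₂)
    (α β : ℝ) (hα : α ∈ Set.Ioo (0 : ℝ) 1) (hβ : 1 < β)
    (c : ℝ → ℝ → ℝ → ℝ)
    (hc : ∀ w u₁ u₂, c w u₁ u₂
      = α * u₁ ^ 2 + β * (u₂ - w) ^ 2 - (u₁ - u₂ + w) ^ 2)
    (JS : (ℝ → ℝ) → (ℝ × ℝ → ℝ) → ℝ)
    (hJS : ∀ γ₁ δ₂, JS γ₁ δ₂
      = ∫ ω, c (ω₂ ω) (γ₁ (ω₁ ω)) (δ₂ (ω₁ ω, ω₂ ω)) ∂P) :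
    -- (a)
    (∀ t : ℝ,
      (∀ ω, c (ω₂ ω) t ((fun p : ℝ × ℝ => p.2) (ω₁ ω, ω₂ ω)) = (α - 1) * t ^ 2)
      ∧ JS (fun _ => t) (fun p => p.2) = (α - 1) * t ^ 2)
    -- (b)
    ∧ (∀ M : ℝ, ∃ γ₁ : ℝ → ℝ, Measurable γ₁ ∧ JS γ₁ (fun p => p.2) < M)
    -- (c)
    ∧ ¬ ((∀ γ₁ : ℝ → ℝ, Measurable γ₁ →
            JS (fun _ => 0) (fun p => p.2) ≤ JS γ₁ (fun p => p.2))
        ∧ (∀ δ₂ : ℝ × ℝ → ℝ, Measurable δ₂ →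
            JS (fun _ => 0) (fun p => p.2) ≤ JS (fun _ => 0) δ₂)) := by

  obtain ⟨hα0, hα1⟩ := hα
  have ha : ∀ t : ℝ,
      (∀ ω, c (ω₂ ω) t ((fun p : ℝ × ℝ => p.2) (ω₁ ω, ω₂ ω)) = (α - 1) * t ^ 2)
      ∧ JS (fun _ => t) (fun p => p.2) = (α - 1) * t ^ 2 := by
    intro t
    have hpt : ∀ ω, c (ω₂ ω) t ((fun p : ℝ × ℝ => p.2) (ω₁ ω, ω₂ ω)) = (α - 1) * t ^ 2 := by
      intro ω; rw [hc]; ring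
    refine ⟨hpt, ?_⟩
    rw [hJS]
    have : (fun ω => c (ω₂ ω) ((fun _ : ℝ => t) (ω₁ ω)) ((fun p : ℝ × ℝ => p.2) (ω₁ ω, ω₂ ω)))
        = fun _ => (α - 1) * t ^ 2 := funext fun ω => hpt ω
    rw [this, integral_const, probReal_univ]
    simp
  have hb : ∀ M : ℝ, ∃ γ₁ : ℝ → ℝ, Measurable γ₁ ∧ JS γ₁ (fun p => p.2) < M := by
    intro M
    set t : ℝ := Real.sqrt ((|M| + 1) / (1 - α)) with ht
    refine ⟨fun _ => t, measurable_const, ?_⟩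
    rw [(ha t).2]
    have h1α : (0:ℝ) < 1 - α := by linarith
    have harg : (0:ℝ) ≤ (|M| + 1) / (1 - α) := by positivity
    have ht2 : t ^ 2 = (|M| + 1) / (1 - α) := Real.sq_sqrt harg
    rw [ht2]
    have : (α - 1) * ((|M| + 1) / (1 - α)) = -(|M| + 1) := by
      field_simp; ring
    rw [this]
    have := abs_nonneg M
    have := neg_abs_le M
    linarith
  refine ⟨ha, hb, ?_⟩
  rintro ⟨h1, _⟩
  obtain ⟨γ₁, hγm, hγlt⟩ := hb (JS (fun _ => 0) (fun p => p.2))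
  exact absurd (h1 γ₁ hγm) (not_le.mpr hγlt)
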